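/- Let X and Y be Hilbert spaces and let B : X → Y be a bounded linear operator which is surjective. Then the bounded linear operator J : X × Y → X × Y defined by J(x,u) = (x + B*u, Bx) is invertible, i.e. J⁻¹ exists as a bounded linear operator from X × Y to itself. -/

import Mathlib

open ContinuousLinearMap

/-- If `B : X → Y` is a surjective bounded linear operator between Hilbert spaces, then
the bounded linear operator `J(x,u) = (x + B* u, B x)` on `X × Y` is invertible, i.e.
it agrees with a continuous linear equivalence of `X × Y` onto itself (so that `J⁻¹`
is a bounded linear operator). -/
theorem surjective_adjoint_block_operator_invertible
    {X Y : Type*} [NormedAddCommGroup X] [InnerProductSpace ℝ X] [CompleteSpace X]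
    [NormedAddCommGroup Y] [InnerProductSpace ℝ Y] [CompleteSpace Y]
    (B : X →L[ℝ] Y) (hsurj : Function.Surjective B) :
    ∃ J : (X × Y) ≃L[ℝ] (X × Y),
      ∀ p : X × Y, J p = (p.1 + ContinuousLinearMap.adjoint B p.2, B p.1) := by
  obtain ⟨C, hC, hpre⟩ := B.exists_preimage_norm_le hsurj
  set Bs : Y →L[ℝ] X := ContinuousLinearMap.adjoint B with hBsdef
  -- lower bound on the adjoint
  have hlow : ∀ u : Y, ‖u‖ ≤ C * ‖Bs u‖ := by
    intro u
    obtain ⟨x, hx1, hx2⟩ := hpre u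
    have h1 : ‖u‖ * ‖u‖ = inner ℝ u (B x) := by
      rw [hx1]; exact (real_inner_self_eq_norm_mul_norm u).symm
    have h2 : (inner ℝ u (B x) : ℝ) = inner ℝ (Bs u) x :=
      (ContinuousLinearMap.adjoint_inner_left B x u).symm
    have h3 : (inner ℝ (Bs u) x : ℝ) ≤ ‖Bs u‖ * ‖x‖ := real_inner_le_norm _ _
    have h4 : ‖Bs u‖ * ‖x‖ ≤ ‖Bs u‖ * (C * ‖u‖) :=
      mul_le_mul_of_nonneg_left hx2 (norm_nonneg _)
    rcases (norm_nonneg u).eq_or_lt with h | h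
    · rw [← h]; positivity
    · have := h1.le.trans (h2.le.trans (h3.trans h4))
      nlinarith
  have hBs0 : ∀ v : Y, Bs v = 0 → v = 0 := by
    intro v hv
    have := hlow v
    rw [hv, norm_zero, mul_zero] at this
    exact norm_le_zero_iff.mp this
  set T : Y →L[ℝ] Y := B.comp Bs with hTdef
  have hTinner : ∀ v : Y, (inner ℝ (T v) v : ℝ) = ‖Bs v‖ ^ 2 := by
    intro v
    have h : (inner ℝ (Bs v) (Bs v) : ℝ) = inner ℝ v (B (Bs v)) :=
      ContinuousLinearMap.adjoint_inner_left B (Bs v) v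
    rw [show T v = B (Bs v) from rfl, real_inner_comm, ← h,
      real_inner_self_eq_norm_sq]
  have hBsSq : ∀ v : Y, ‖Bs v‖ ^ 2 = 0 → v = 0 := fun v h =>
    hBs0 v (norm_eq_zero.mp (pow_eq_zero_iff two_ne_zero |>.mp h))
  have hTlow : ∀ v : Y, ‖v‖ ≤ (C * C) * ‖T v‖ := by
    intro v
    rcases eq_or_ne (Bs v) 0 with h | h
    · rw [hBs0 v h]; simp
    · have hb : 0 < ‖Bs v‖ := norm_pos_iff.mpr h
      have h1 : ‖Bs v‖ ^ 2 ≤ ‖T v‖ * ‖v‖ := by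
        rw [← hTinner v]; exact real_inner_le_norm _ _
      have h2 := hlow v
      have h3 : ‖Bs v‖ ≤ C * ‖T v‖ := by
        have h4 : ‖Bs v‖ * ‖Bs v‖ ≤ (C * ‖T v‖) * ‖Bs v‖ := by
          nlinarith [mul_le_mul_of_nonneg_left h2 (norm_nonneg (T v))]
        exact le_of_mul_le_mul_right h4 hb
      calc ‖v‖ ≤ C * ‖Bs v‖ := h2
        _ ≤ C * (C * ‖T v‖) := mul_le_mul_of_nonneg_left h3 hC.le
        _ = (C * C) * ‖T v‖ := by ring
  have hanti : AntilipschitzWith ⟨C * C, by positivity⟩ T :=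
    ContinuousLinearMap.antilipschitz_of_bound T hTlow
  have hker : LinearMap.ker (T : Y →ₗ[ℝ] Y) = ⊥ := by
    rw [Submodule.eq_bot_iff]
    intro v hv
    have hv' : T v = 0 := hv
    exact hBsSq v (by rw [← hTinner v, hv', inner_zero_left])
  have hclosed : IsClosed (Set.range T) := hanti.isClosed_range T.uniformContinuous
  have hrange : LinearMap.range (T : Y →ₗ[ℝ] Y) = ⊤ := by
    have hcl : IsClosed ((LinearMap.range (T : Y →ₗ[ℝ] Y) : Submodule ℝ Y) : Set Y) := by
      exact hclosed
    haveI : CompleteSpace (LinearMap.range (T : Y →ₗ[ℝ] Y)) := hcl.completeSpace_coe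
    rw [← Submodule.orthogonal_eq_bot_iff, Submodule.eq_bot_iff]
    intro v hv
    have h0 : (inner ℝ (T v) v : ℝ) = 0 := by
      have := (Submodule.mem_orthogonal _ v).mp hv (T v) (LinearMap.mem_range_self _ v)
      simpa [real_inner_comm] using this
    exact hBsSq v (by rw [← hTinner v, h0])
  -- the inverse of T = B B*
  let E : Y ≃L[ℝ] Y := ContinuousLinearEquiv.ofBijective T hker hrange
  let S : Y →L[ℝ] Y := (E.symm : Y →L[ℝ] Y)
  have hE : ∀ y, E y = T y := fun y => rfl
  have hST : ∀ y, S (T y) = y := fun y => by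
    have h := E.symm_apply_apply y
    rw [hE] at h; exact h
  have hTS : ∀ y, T (S y) = y := fun y => by
    have h := E.apply_symm_apply y
    rw [hE] at h; exact h
  let Jf : (X × Y) →L[ℝ] (X × Y) :=
    (fst ℝ X Y + Bs.comp (snd ℝ X Y)).prod (B.comp (fst ℝ X Y))
  let D : (X × Y) →L[ℝ] Y := B.comp (fst ℝ X Y) - snd ℝ X Y
  let U : (X × Y) →L[ℝ] Y := S.comp D
  let Jinv : (X × Y) →L[ℝ] (X × Y) := ((fst ℝ X Y) - Bs.comp U).prod U
  have h1 : ∀ p : X × Y, Jinv (Jf p) = p := by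
    rintro ⟨x, u⟩
    show (x + Bs u - Bs (S (B (x + Bs u) - B x)), S (B (x + Bs u) - B x)) = (x, u)
    have hD : B (x + Bs u) - B x = T u := by
      rw [map_add, add_sub_cancel_left]; rfl
    rw [hD, hST]
    simp
  have h2 : ∀ p : X × Y, Jf (Jinv p) = p := by
    rintro ⟨a, b⟩
    show (a - Bs (S (B a - b)) + Bs (S (B a - b)), B (a - Bs (S (B a - b)))) = (a, b)
    have hB : B (a - Bs (S (B a - b))) = b := by
      rw [map_sub, show B (Bs (S (B a - b))) = T (S (B a - b)) from rfl, hTS]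
      abel
    rw [hB]
    simp
  exact ⟨ContinuousLinearEquiv.equivOfInverse Jf Jinv h1 h2, fun p => rfl⟩
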